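/- Let X ⊆ ℝ^ℓ and Y ⊆ ℝ^m be open sets with ℓ < n, and let F : X × Y → ℝ^n be a C¹ function such that 0 is a regular value of F (i.e., the total derivative DF(x,y) is surjective at every point (x,y) with F(x,y) = 0). Then for Lebesgue almost every y ∈ Y, the set {x ∈ X : F(x,y) = 0} is empty. -/

import Mathlib

open MeasureTheory ENNReal NNReal

lemma aux_volume_eq_zero_of_dimH_lt {m : ℕ} {s : Set (EuclideanSpace ℝ (Fin m))}
    (h : dimH s < m) : volume s = 0 := by
  set e : EuclideanSpace ℝ (Fin m) → (Fin m → ℝ) := ⇑(WithLp.equiv 2 (Fin m → ℝ)) with he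
  have hlip : LipschitzWith 1 e := PiLp.lipschitzWith_ofLp 2 _
  have hdim : dimH (e '' s) < ((m : ℝ≥0) : ℝ≥0∞) := by
    refine lt_of_le_of_lt (hlip.dimH_image_le s) ?_
    simpa using h
  have h0 : (volume : Measure (Fin m → ℝ)) (e '' s) = 0 := by
    have := hausdorffMeasure_of_dimH_lt (X := Fin m → ℝ) hdim
    rw [← this, ← MeasureTheory.hausdorffMeasure_pi_real (ι := Fin m)]
    norm_num
  have hms := measurableSet_toMeasurable volume (e '' s)
  have h0' : volume (toMeasurable volume (e '' s)) = 0 := by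
    rw [measure_toMeasurable]; exact h0
  have hst : s ⊆ e ⁻¹' (toMeasurable volume (e '' s)) := fun x hx =>
    subset_toMeasurable _ _ ⟨x, hx, rfl⟩
  refine measure_mono_null hst ?_
  have hpre := (EuclideanSpace.volume_preserving_symm_measurableEquiv_toLp (Fin m)).measure_preimage
    (s := toMeasurable volume (e '' s))
  rw [show (⇑(MeasurableEquiv.toLp 2 (Fin m → ℝ)).symm : EuclideanSpace ℝ (Fin m) → Fin m → ℝ) = e from rfl] at hpre
  rw [hpre hms.nullMeasurableSet]
  exact h0'

/-- Parametric transversality theorem: if `0` is a regular value of the C¹ map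
`F : X × Y → ℝⁿ` with `dim X = ℓ < n`, then for a.e. parameter `y ∈ Y` the slice
`{x ∈ X : F(x,y) = 0}` is empty. -/
theorem stmt0 {ℓ m n : ℕ} (hn : ℓ < n)
    (X : Set (EuclideanSpace ℝ (Fin ℓ))) (Y : Set (EuclideanSpace ℝ (Fin m)))
    (hX : IsOpen X) (hY : IsOpen Y)
    (F : EuclideanSpace ℝ (Fin ℓ) × EuclideanSpace ℝ (Fin m) → EuclideanSpace ℝ (Fin n))
    (hF : ContDiffOn ℝ 1 F (X ×ˢ Y))
    (hreg : ∀ p ∈ X ×ˢ Y, F p = 0 → Function.Surjective (fderivWithin ℝ F (X ×ˢ Y) p)) :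
    ∀ᵐ y ∂(volume : Measure (EuclideanSpace ℝ (Fin m))),
      y ∈ Y → ∀ x ∈ X, F (x, y) ≠ 0 := by
  classical
  set Z : Set (EuclideanSpace ℝ (Fin ℓ) × EuclideanSpace ℝ (Fin m)) :=
    {p | p ∈ X ×ˢ Y ∧ F p = 0} with hZdef
  have hopen : IsOpen (X ×ˢ Y) := hX.prod hY
  -- local structure near a zero
  have key : ∀ p ∈ Z, (∃ t ∈ nhdsWithin p Z, dimH t ≤ ((ℓ + m - n : ℕ) : ℝ≥0∞)) ∧ n ≤ ℓ + m := by
    rintro p ⟨hpXY, hp0⟩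
    have hCA : ContDiffAt ℝ 1 F p := hF.contDiffAt (hopen.mem_nhds hpXY)
    have hsd : HasStrictFDerivAt F (fderiv ℝ F p) p := hCA.hasStrictFDerivAt one_ne_zero
    have hfw : fderivWithin ℝ F (X ×ˢ Y) p = fderiv ℝ F p := fderivWithin_of_isOpen hopen hpXY
    set f' := fderiv ℝ F p with hf'def
    have hsurj : f'.range = ⊤ := by
      rw [LinearMap.range_eq_top]
      rw [← hfw]
      exact hreg p hpXY hp0
    -- rank-nullity
    have hrn : Module.finrank ℝ (f'.range) + Module.finrank ℝ (f'.ker)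
        = ℓ + m := by
      have h1 := LinearMap.finrank_range_add_finrank_ker
        (f' : (EuclideanSpace ℝ (Fin ℓ) × EuclideanSpace ℝ (Fin m)) →ₗ[ℝ]
          EuclideanSpace ℝ (Fin n))
      rw [show LinearMap.range (f' : (EuclideanSpace ℝ (Fin ℓ) × EuclideanSpace ℝ (Fin m)) →ₗ[ℝ]
          EuclideanSpace ℝ (Fin n)) = f'.range from rfl,
        show LinearMap.ker (f' : (EuclideanSpace ℝ (Fin ℓ) × EuclideanSpace ℝ (Fin m)) →ₗ[ℝ]
          EuclideanSpace ℝ (Fin n)) = f'.ker from rfl] at h1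
      rw [h1]
      simp [finrank_euclideanSpace_fin]
    have hrange : Module.finrank ℝ (f'.range) = n := by
      rw [hsurj]
      simp [finrank_euclideanSpace_fin]
    have hker : Module.finrank ℝ (f'.ker) = ℓ + m - n := by omega
    have hnlm : n ≤ ℓ + m := by omega
    refine ⟨?_, hnlm⟩
    set e := HasStrictFDerivAt.implicitToOpenPartialHomeomorph F f' hsd hsurj with he
    set g := HasStrictFDerivAt.implicitFunction F f' hsd hsurj 0 with hg
    have hg0 : HasStrictFDerivAt g (f'.ker).subtypeL 0 := by
      have := HasStrictFDerivAt.to_implicitFunction hsd hsurj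
      rwa [hp0] at this
    obtain ⟨K, t, htmem, hlip⟩ := hg0.exists_lipschitzOnWith
    have hsrc : p ∈ e.source := HasStrictFDerivAt.mem_implicitToOpenPartialHomeomorph_source hsd hsurj
    have hept : e p = (0, 0) := by
      rw [he, HasStrictFDerivAt.implicitToOpenPartialHomeomorph_self hsd hsurj, hp0]
    have hcont : ContinuousAt (fun x => (e x).2) p :=
      continuous_snd.continuousAt.comp (e.continuousAt hsrc)
    have h2 : ∀ᶠ x in nhds p, (e x).2 ∈ t := by
      have : (e p).2 = 0 := by rw [hept]
      have := hcont.preimage_mem_nhds (by rw [this]; exact htmem)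
      exact this
    have h1 : ∀ᶠ x in nhds p,
        HasStrictFDerivAt.implicitFunction F f' hsd hsurj (F x) (e x).2 = x := HasStrictFDerivAt.eq_implicitFunction hsd hsurj
    obtain ⟨U, hU, hUP⟩ := (h1.and h2).exists_mem
    refine ⟨Z ∩ U, Filter.inter_mem self_mem_nhdsWithin (mem_nhdsWithin_of_mem_nhds hU), ?_⟩
    have hsub : Z ∩ U ⊆ g '' t := by
      rintro x ⟨⟨hxXY, hx0⟩, hxU⟩
      obtain ⟨hx1, hx2⟩ := hUP x hxU
      refine ⟨(e x).2, hx2, ?_⟩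
      rw [hg, ← hx0]
      exact hx1
    calc dimH (Z ∩ U) ≤ dimH (g '' t) := dimH_mono hsub
      _ ≤ dimH t := hlip.dimH_image_le
      _ ≤ dimH (Set.univ : Set (f'.ker)) := dimH_mono (Set.subset_univ t)
      _ = Module.finrank ℝ (f'.ker) := Real.dimH_univ_eq_finrank _
      _ ≤ ((ℓ + m - n : ℕ) : ℝ≥0∞) := by rw [hker]
  -- global dimension bound
  have hdimZ : dimH Z ≤ ((ℓ + m - n : ℕ) : ℝ≥0∞) := by
    by_contra hcon
    obtain ⟨x, hxZ, hx⟩ := exists_mem_nhdsWithin_lt_dimH_of_lt_dimH (lt_of_not_ge hcon)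
    obtain ⟨⟨t, ht, htd⟩, _⟩ := key x hxZ
    exact absurd htd (not_le.2 (hx t ht))
  -- bad set is contained in the projection of Z
  have hsubB : {y : EuclideanSpace ℝ (Fin m) | ¬ (y ∈ Y → ∀ x ∈ X, F (x, y) ≠ 0)}
      ⊆ Prod.snd '' Z := by
    intro y hy
    simp only [Set.mem_setOf_eq, not_forall, not_ne_iff] at hy
    obtain ⟨hyY, x, hxX, hx0⟩ := hy
    exact ⟨(x, y), ⟨Set.mem_prod.2 ⟨hxX, hyY⟩, hx0⟩, rfl⟩
  rw [MeasureTheory.ae_iff]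
  refine measure_mono_null hsubB ?_
  rcases Z.eq_empty_or_nonempty with hZe | ⟨p, hp⟩
  · rw [hZe]
    simp
  · obtain ⟨_, hnlm⟩ := key p hp
    have hdimB : dimH (Prod.snd '' Z) < (m : ℝ≥0∞) := by
      refine lt_of_le_of_lt ((LipschitzWith.prod_snd.dimH_image_le Z).trans hdimZ) ?_
      have hlt : ℓ + m - n < m := by omega
      exact_mod_cast hlt
    exact aux_volume_eq_zero_of_dimH_lt hdimB
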